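/- In 𝔽₂[x], x² + x + 1 divides σ((x³+x+1)^{2h}) = 1 + (x³+x+1) + ⋯ + (x³+x+1)^{2h} if and only if 3 divides 2h + 1. -/

import Mathlib

open Polynomial

theorem deg2_dvd_sigma_iff (h : ℕ) (hh : 1 ≤ h) :
    ((X ^ 2 + X + 1 : Polynomial (ZMod 2)) ∣
        ∑ i ∈ Finset.range (2 * h + 1), (X ^ 3 + X + 1 : Polynomial (ZMod 2)) ^ i) ↔
      3 ∣ 2 * h + 1 := by
  set p : Polynomial (ZMod 2) := X ^ 2 + X + 1 with hp
  have h2 : (2 : Polynomial (ZMod 2)) = 0 := by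
    have := CharP.cast_eq_zero (Polynomial (ZMod 2)) 2
    exact_mod_cast this
  have hpdeg : p.degree = 2 := by rw [hp]; compute_degree!
  set n := 2 * h + 1 with hn
  set I : Ideal (Polynomial (ZMod 2)) := Ideal.span {p} with hI
  set f : Polynomial (ZMod 2) →+* Polynomial (ZMod 2) ⧸ I := Ideal.Quotient.mk I with hf
  have key : ∀ a : Polynomial (ZMod 2), f a = 0 ↔ p ∣ a := fun a =>
    Ideal.Quotient.eq_zero_iff_dvd p a
  set t := f X with htdef
  have hq2 : (2 : Polynomial (ZMod 2) ⧸ I) = 0 := by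
    rw [show (2 : Polynomial (ZMod 2) ⧸ I) = f 2 from (map_ofNat f 2).symm, h2, map_zero]
  have ht : t ^ 2 + t + 1 = 0 := by
    have hfp : f p = 0 := (key p).2 dvd_rfl
    rw [hp] at hfp
    simpa [map_add, map_pow] using hfp
  have ht3 : t ^ 3 = 1 := by linear_combination (t + 1) * ht - (t ^ 2 + t + 1) * hq2
  have hfq : f (X ^ 3 + X + 1) = t := by
    have e : f (X ^ 3 + X + 1) = t ^ 3 + t + 1 := by simp [map_add, map_pow, htdef]
    rw [e]; linear_combination ht3 + hq2
  have hsum : f (∑ i ∈ Finset.range n, (X ^ 3 + X + 1) ^ i)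
      = ∑ i ∈ Finset.range n, t ^ i := by
    rw [map_sum]
    refine Finset.sum_congr rfl fun i _ => ?_
    rw [map_pow, hfq]
  have hred : ∀ k r : ℕ, ∑ i ∈ Finset.range (3 * k + r), t ^ i
      = ∑ i ∈ Finset.range r, t ^ i := by
    intro k
    induction k with
    | zero => simp
    | succ k ih =>
      intro r
      have e : 3 * (k + 1) + r = (3 * k + r) + 1 + 1 + 1 := by ring
      rw [e, Finset.sum_range_succ, Finset.sum_range_succ, Finset.sum_range_succ, ih r]
      linear_combination (t ^ (3 * k + r)) * ht
  have hone : (1 : Polynomial (ZMod 2) ⧸ I) ≠ 0 := by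
    intro h1
    have : p ∣ 1 := by
      rw [← key 1, map_one]; exact h1
    have := Polynomial.degree_eq_zero_of_isUnit (isUnit_of_dvd_one this)
    rw [hpdeg] at this
    exact absurd this (by norm_num)
  have hone_t : (1 : Polynomial (ZMod 2) ⧸ I) + t ≠ 0 := by
    intro h1
    have hfx : f (1 + X) = 0 := by rw [map_add, map_one, ← htdef, h1]
    have hdvd : p ∣ 1 + X := (key (1 + X)).1 hfx
    have hne : (1 + X : Polynomial (ZMod 2)) ≠ 0 := by
      intro hz
      have := congrArg (Polynomial.coeff · 0) hz
      simp at this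
    have hle := Polynomial.degree_le_of_dvd hdvd hne
    have hdx : (1 + X : Polynomial (ZMod 2)).degree = 1 := by compute_degree!
    rw [hpdeg, hdx] at hle
    exact absurd hle (by norm_num)
  have hmain : (∑ i ∈ Finset.range n, t ^ i = 0) ↔ 3 ∣ n := by
    rw [show n = 3 * (n / 3) + n % 3 by omega, hred]
    have hr : n % 3 = 0 ∨ n % 3 = 1 ∨ n % 3 = 2 := by omega
    rcases hr with hr | hr | hr <;> rw [hr]
    · simp only [Finset.range_zero, Finset.sum_empty]
      constructor
      · intro _; omega
      · intro _; trivial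
    · simp only [Finset.sum_range_one, pow_zero]
      constructor
      · intro h1; exact absurd h1 hone
      · intro hd; exact absurd hd (by omega)
    · rw [Finset.sum_range_succ, Finset.sum_range_one, pow_zero, pow_one]
      constructor
      · intro h1; exact absurd h1 hone_t
      · intro hd; exact absurd hd (by omega)
  rw [← key, hsum]
  exact hmain
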